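/- Any twist is selfadjoint: if T is a bounded operator on H⊗H with ‖T‖ ≤ 1 such that all operators P_{T,n} are positive (in particular P_{T,2} = 1 + T ≥ 0), then T = T*. -/

import Mathlib

/-!
STATEMENT 0: Any twist is selfadjoint.

Setting: `V n` plays the role of the tensor power `H^{⊗n}` of a complex Hilbert
space `H`, `Tk n k` the operator `T_k = 1^{⊗(k-1)} ⊗ T ⊗ 1^{⊗(n-k-1)}` on `V n`
(so `Tk 2 1 = T` on `H ⊗ H`), and `ampL n` the amplification `X ↦ 1 ⊗ X` from
operators on `V n` to operators on `V (n+1)`.  The operators `R_{T,n}` and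
`P_{T,n}` are defined exactly as in the paper.  The theorem: if `‖T‖ ≤ 1` and
all `P_{T,n}` are positive (in particular `P_{T,2} = 1 + T ≥ 0`), then `T` is
selfadjoint.
-/

noncomputable section
open scoped ComplexOrder
open ContinuousLinearMap

/-- the ordered product `T_1 T_2 ⋯ T_j` (empty product `= 1` for `j = 0`). -/
def twistProd {W : Type*} [NormedAddCommGroup W] [InnerProductSpace ℂ W]
    (Tk : ℕ → (W →L[ℂ] W)) (j : ℕ) : W →L[ℂ] W :=
  ((List.range j).map fun i => Tk (i + 1)).prod

/-- `R_{T,n} = 1 + T_1 + T_1T_2 + ⋯ + T_1⋯T_{n-1}`. -/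
def Rop {W : Type*} [NormedAddCommGroup W] [InnerProductSpace ℂ W]
    (Tk : ℕ → (W →L[ℂ] W)) (n : ℕ) : W →L[ℂ] W :=
  ∑ j ∈ Finset.range n, twistProd Tk j

/-- `P_{T,n}`, defined by `P_{T,0} = P_{T,1} = 1` and
`P_{T,n+1} = (1 ⊗ P_{T,n}) R_{T,n+1}`, where `ampL n` is the amplification
`X ↦ 1 ⊗ X`. -/
def Pop {V : ℕ → Type*} [∀ n, NormedAddCommGroup (V n)] [∀ n, InnerProductSpace ℂ (V n)]
    (Tk : ∀ n, ℕ → (V n →L[ℂ] V n))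
    (ampL : ∀ n, (V n →L[ℂ] V n) → (V (n + 1) →L[ℂ] V (n + 1))) : ∀ n, V n →L[ℂ] V n
  | 0 => 1
  | n + 1 => ampL n (Pop Tk ampL n) * Rop (Tk (n + 1)) (n + 1)

/-- If `T` is a bounded operator on `H ⊗ H` with `‖T‖ ≤ 1` such
that all the operators `P_{T,n}` are positive (in particular
`P_{T,2} = 1 + T ≥ 0`), then `T = T*`. -/
theorem twist_isSelfAdjoint
    {V : ℕ → Type*} [∀ n, NormedAddCommGroup (V n)] [∀ n, InnerProductSpace ℂ (V n)]
    [∀ n, CompleteSpace (V n)]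
    (Tk : ∀ n, ℕ → (V n →L[ℂ] V n))
    (ampL : ∀ n, (V n →L[ℂ] V n) → (V (n + 1) →L[ℂ] V (n + 1)))
    (hampL_one : ∀ n, ampL n 1 = 1)
    (hnorm : ‖Tk 2 1‖ ≤ 1)
    (hpos : ∀ n (x : V n), 0 ≤ (inner ℂ x (Pop Tk ampL n x) : ℂ)) :
    IsSelfAdjoint (Tk 2 1) := by
  set T := Tk 2 1 with hT
  have hP2 : Pop Tk ampL 2 = 1 + T := by
    show ampL 1 (Pop Tk ampL 1) * Rop (Tk 2) 2 = 1 + T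
    have h1 : Pop Tk ampL 1 = 1 := by
      show ampL 0 (Pop Tk ampL 0) * Rop (Tk 1) 1 = 1
      simp [Pop, Rop, twistProd, hampL_one]
    rw [h1, hampL_one]
    simp [Rop, Finset.sum_range_succ, twistProd, List.range_succ, hT]
  rw [isSelfAdjoint_iff_isSymmetric]
  rw [show (T : V 2 →L[ℂ] V 2).IsSymmetric ↔ (T : V 2 →ₗ[ℂ] V 2).IsSymmetric from Iff.rfl,
    LinearMap.isSymmetric_iff_inner_map_self_real]
  intro v
  have h := hpos 2 v
  rw [hP2] at h
  have hre : (starRingEnd ℂ) (inner ℂ v ((1 + T) v) : ℂ) = inner ℂ v ((1 + T) v) := by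
    exact Complex.conj_eq_iff_im.mpr (by
      have := Complex.le_def.mp h
      simpa using this.2.symm)
  have hvv : (starRingEnd ℂ) (inner ℂ v v : ℂ) = inner ℂ v v := inner_self_conj v
  simp only [ContinuousLinearMap.add_apply, ContinuousLinearMap.one_apply, inner_add_right,
    map_add, hvv] at hre
  have h2 : (starRingEnd ℂ) (inner ℂ v (T v) : ℂ) = inner ℂ v (T v) := by linear_combination hre
  rw [inner_conj_symm]
  exact h2.symm.trans (inner_conj_symm _ _)
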